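/- Let N > 10 + 4l with l > -2. Then p_c(l,0) := [(N-2)² - 2(l+2)(N+l) + 2(l+2)√((N+l)² - (N-2)²)] / [(N-2)(N-10-4l)] satisfies p_c(l,0) > (N+2+2l)/(N-2), and p = p_c(l,0) solves N = (2p + l + (l+2)(2p + 2√(p(p-1)) - 1))/(p-1). -/

import Mathlib

theorem stmt7 (N : ℕ) (hN : 3 ≤ N) (l : ℝ) (hl : -2 < l)
    (hNl : 10 + 4 * l < (N : ℝ))
    (pc : ℝ)
    (hpc : pc = (((N : ℝ) - 2) ^ 2 - 2 * (l + 2) * ((N : ℝ) + l) +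
        2 * (l + 2) * Real.sqrt (((N : ℝ) + l) ^ 2 - ((N : ℝ) - 2) ^ 2)) /
        (((N : ℝ) - 2) * ((N : ℝ) - 10 - 4 * l))) :
    ((N : ℝ) + 2 + 2 * l) / ((N : ℝ) - 2) < pc ∧
    (N : ℝ) = (2 * pc + l + (l + 2) * (2 * pc + 2 * Real.sqrt (pc * (pc - 1)) - 1)) / (pc - 1) := by
  set n := (N : ℝ) with hn
  have hm : (0:ℝ) < l + 2 := by linarith
  have hx : (0:ℝ) < n - 2 := by linarith
  have hD0 : (0:ℝ) < n - 10 - 4*l := by linarith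
  have hD : (0:ℝ) < (n-2)*(n-10-4*l) := mul_pos hx hD0
  have hrad : (0:ℝ) ≤ (n+l)^2 - (n-2)^2 := by nlinarith
  set s := Real.sqrt ((n+l)^2 - (n-2)^2) with hsdef
  have hs0 : 0 ≤ s := Real.sqrt_nonneg _
  have hs2 : s^2 = (n+l)^2 - (n-2)^2 := Real.sq_sqrt hrad
  have hpcD : pc * ((n-2)*(n-10-4*l)) = (n-2)^2 - 2*(l+2)*(n+l) + 2*(l+2)*s := by
    rw [hpc]; field_simp
    exact mul_div_cancel_right₀ _ (ne_of_gt (by linarith))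
  have hgt : (n + 2 + 2*l)/(n-2) < pc := by
    rw [div_lt_iff₀ hx]
    nlinarith [hpcD, mul_nonneg hs0 hm.le, mul_pos hm hm, hD0]
  have hpc1 : 1 < pc := by
    have h1 : (1:ℝ) < (n + 2 + 2*l)/(n-2) := by
      rw [lt_div_iff₀ hx]; linarith
    linarith
  have hquadD : ((n-2)*(n-10-4*l)) * (((n-2)*(n-10-4*l))*pc^2
      - 2*((n-2)^2 - 2*(l+2)*(n-2) - 2*(l+2)^2)*pc + (n-2)^2) = 0 := by
    linear_combination (pc*((n-2)*(n-10-4*l)) - ((n-2)^2 - 2*(l+2)*(n-2) - 2*(l+2)^2)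
      + 2*(l+2)*s) * hpcD + 4*(l+2)^2 * hs2
  have hquad : ((n-2)*(n-10-4*l))*pc^2
      - 2*((n-2)^2 - 2*(l+2)*(n-2) - 2*(l+2)^2)*pc + (n-2)^2 = 0 :=
    (mul_eq_zero.mp hquadD).resolve_left hD.ne'
  have hx2m : (0:ℝ) < n - 2 - 2*(l+2) := by linarith
  have h1 : ((n-2-2*(l+2))*pc - (n-2)) * ((n-2)*(n-10-4*l))
      = 2*(l+2)^2*(n-2+2*(l+2)) + 2*(l+2)*(n-2-2*(l+2))*s := by
    linear_combination (n-2-2*(l+2)) * hpcD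
  have key : 0 ≤ (n-2-2*(l+2))*pc - (n-2) := by
    nlinarith [h1, mul_pos hm hm, mul_nonneg (mul_nonneg hm.le hx2m.le) hs0, hD]
  have hval : pc*(pc-1) = (((n-2-2*(l+2))*pc - (n-2))/(2*(l+2)))^2 := by
    rw [div_pow, eq_div_iff (by positivity)]
    linear_combination (-1) * hquad
  have hsqrt : Real.sqrt (pc*(pc-1)) = ((n-2-2*(l+2))*pc - (n-2))/(2*(l+2)) := by
    rw [hval, Real.sqrt_sq (div_nonneg key (by linarith))]
  refine ⟨hgt, ?_⟩
  rw [hsqrt, eq_div_iff (by linarith : pc - 1 ≠ 0)]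
  field_simp
  ring
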